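/- arXiv:2602.09508 — 5 statements merged into one kernel-verified Lean document; each statement's English description precedes it below -/
import Mathlib

section
/- The derivation d of 𝓑 given by d(L_{β,j}) = β L_{β,j} is an outer derivation: there is no element a ∈ 𝓑 with d = ad(a). -/
noncomputable section

abbrev B := (ℤ × ℕ) →₀ ℂ

/-- basis element `L α i` -/
def L (α : ℤ) (i : ℕ) : B := Finsupp.single (α, i) 1

/-- structure constant `(α-1)(j+1) - (β-1)(i+1)` -/
def coef (p q : ℤ × ℕ) : ℂ :=
  ((p.1 - 1) * ((q.2 : ℤ) + 1) - (q.1 - 1) * ((p.2 : ℤ) + 1) : ℤ)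

/-- the Block-type bracket, as a bilinear map -/
def br : B →ₗ[ℂ] B →ₗ[ℂ] B :=
  Finsupp.lsum ℂ fun p => LinearMap.toSpanSingleton ℂ _
    (Finsupp.lsum ℂ fun q => LinearMap.toSpanSingleton ℂ _
      (coef p q • L (p.1 + q.1) (p.2 + q.2)))

/-- the outer derivation `d`, with `d (L β j) = β • L β j` -/
def dmap : B →ₗ[ℂ] B :=
  Finsupp.lsum ℂ fun p => LinearMap.toSpanSingleton ℂ _ ((p.1 : ℂ) • L p.1 p.2)

def IsDer (D : B →ₗ[ℂ] B) : Prop := ∀ x y, D (br x y) = br (D x) y + br x (D y)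

def Is2Local (Δ : B → B) : Prop :=
  ∀ x y, ∃ D : B →ₗ[ℂ] B, IsDer D ∧ Δ x = D x ∧ Δ y = D y

lemma dmap_L (β : ℤ) (j : ℕ) : dmap (L β j) = (β : ℂ) • L β j := by
  simp [dmap, L, Finsupp.lsum_single, LinearMap.toSpanSingleton_apply]

lemma br_L_apply (a : B) (β : ℤ) (j : ℕ) :
    (br a (L β j)) (β, j) = a (0, 0) * coef (0, 0) (β, j) := by
  rw [br, Finsupp.lsum_apply, Finsupp.sum, LinearMap.sum_apply, Finsupp.finset_sum_apply]
  simp only [LinearMap.toSpanSingleton_apply, LinearMap.smul_apply, Finsupp.smul_apply, L,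
    Finsupp.lsum_single, Finsupp.single_apply, smul_eq_mul, one_mul,
    Prod.mk.injEq]
  rw [Finset.sum_eq_single (0, 0)]
  · simp
  · rintro ⟨b1, b2⟩ hb hne
    have hn : ¬ ((b1, b2).1 + β = β ∧ (b1, b2).2 + j = j) := by
      rintro ⟨h1, h2⟩
      apply hne
      have hb1 : b1 = 0 := by omega
      have hb2 : b2 = 0 := by omega
      simp [hb1, hb2]
    rw [if_neg hn, mul_zero, mul_zero]
  · intro h
    rw [Finsupp.notMem_support_iff.mp h, zero_mul]

theorem d_is_outer : ¬ ∃ a : B, ∀ x : B, dmap x = br a x := by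
  rintro ⟨a, h⟩
  have h1 := congrArg (fun f : B => f (1, 0)) (h (L 1 0))
  have h2 := congrArg (fun f : B => f (1, 1)) (h (L 1 1))
  simp only [dmap_L, br_L_apply] at h1 h2
  norm_num [L, coef, Finsupp.single_apply] at h1 h2
  have : (1 : ℂ) = 0 := by linear_combination 2 * h1 - h2
  exact one_ne_zero this

end
end

section
/- Let Δ be a 2-local derivation on 𝓑 with Δ(L_{0,0}) = Δ(L_{1,0}) = 0. Then for every β ∈ ℤ and j ∈ ℤ≥0, there exists ξ ∈ ℂ such that Δ(L_{β,j}) = j ξ L_{β,j}. -/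
noncomputable section

lemma br_apply (a : B) (β : ℤ) (j : ℕ) :
    br a (L β j) = a.sum fun p c => (c * coef p (β, j)) • L (p.1 + β) (p.2 + j) := by
  simp [br, L, Finsupp.lsum_apply, LinearMap.toSpanSingleton_apply, Finsupp.sum_single_index,
    Finsupp.sum_apply, smul_smul]

lemma br_apply_pt (a : B) (β : ℤ) (j : ℕ) (r : ℤ × ℕ) :
    br a (L β j) r =
      a.sum fun p c => if (p.1 + β, p.2 + j) = r then c * coef p (β, j) else 0 := by
  rw [br_apply, Finsupp.sum_apply]
  refine Finsupp.sum_congr fun p _ => ?_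
  simp [L, Finsupp.single_apply, mul_ite]
  intro h
  simp [h]

lemma sum_point (f : B) (g : ℤ × ℕ → ℂ → ℂ) (r : ℤ × ℕ) (hg : g r 0 = 0) :
    (f.sum fun p c => if p = r then g p c else 0) = g r (f r) := by
  rw [Finsupp.sum, Finset.sum_eq_single r]
  · simp
  · intro b _ hb; simp [hb]
  · intro h; simp [Finsupp.notMem_support_iff.mp h, hg]

theorem two_local_on_basis (Δ : B → B) (hΔ : Is2Local Δ)
    (hDer : ∀ D : B →ₗ[ℂ] B, IsDer D →
      ∃ (a : B) (lam : ℂ), ∀ x : B, D x = br a x + lam • dmap x)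
    (h0 : Δ (L 0 0) = 0) (h1 : Δ (L 1 0) = 0) :
    ∀ (β : ℤ) (j : ℕ), ∃ ξ : ℂ, Δ (L β j) = ((j : ℂ) * ξ) • L β j := by
  intro β j
  obtain ⟨D, hD, hD0, hDβ⟩ := hΔ (L 0 0) (L β j)
  obtain ⟨a, lam, ha⟩ := hDer D hD
  obtain ⟨D', hD', hD'1, hD'β⟩ := hΔ (L 1 0) (L β j)
  obtain ⟨a', lam', ha'⟩ := hDer D' hD'
  -- `br a (L 0 0) = 0`
  have c1 : br a (L 0 0) = 0 := by
    have h := ha (L 0 0)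
    rw [← hD0, h0, dmap_L] at h
    simpa using h.symm
  -- vanishing of `a` on first coordinate 1
  have hA : ∀ i : ℕ, a (1, i) = 0 := by
    intro i
    have h := congrArg (fun f : B => f (1, i)) c1
    simp only [br_apply_pt, Finsupp.zero_apply] at h
    have h2 : (a.sum fun p c => if p = ((1 : ℤ), i) then c * coef p (0, 0) else 0) = 0 := by
      refine Eq.trans ?_ h
      refine Finsupp.sum_congr fun p _ => if_congr ?_ rfl rfl
      rw [Prod.ext_iff, Prod.ext_iff]; simp
    rw [sum_point _ _ _ (by ring)] at h2
    have hc : coef ((1 : ℤ), i) (0, 0) ≠ 0 := by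
      simp only [coef]
      intro hc
      rw [Int.cast_eq_zero] at hc
      simp at hc
      omega
    exact (mul_eq_zero.mp h2).resolve_right hc
  -- the value of Δ at (β+1, k) is 0
  have F1 : ∀ k : ℕ, Δ (L β j) (β + 1, k) = 0 := by
    intro k
    rw [hDβ, ha (L β j), dmap_L]
    simp only [Finsupp.add_apply, br_apply_pt, Finsupp.smul_apply]
    have hz : (Finsupp.sum a fun p c =>
        if (p.1 + β, p.2 + j) = (β + 1, k) then c * coef p (β, j) else 0) = 0 := by
      rw [Finsupp.sum]
      refine Finset.sum_eq_zero fun p _ => ?_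
      split
      · rename_i hp
        rw [Prod.ext_iff] at hp
        have hp1 : p.1 = 1 := by omega
        have hz2 : a p = 0 := by
          have := hA p.2
          rwa [← hp1, Prod.mk.eta] at this
        simp [hz2]
      · rfl
    rw [hz, zero_add]
    have hne : ((β, j) : ℤ × ℕ) ≠ (β + 1, k) := by
      rw [Ne, Prod.ext_iff]; rintro ⟨h, -⟩; omega
    simp [L, Finsupp.single_apply, hne]
  -- second derivation: `br a' (L 1 0) + lam' • L 1 0 = 0`
  have c2 : br a' (L 1 0) + lam' • L 1 0 = 0 := by
    have h := ha' (L 1 0)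
    rw [← hD'1, h1, dmap_L] at h
    simpa using h.symm
  -- a' vanishing
  have hA' : ∀ p : ℤ × ℕ, p.1 ≠ 1 → p ≠ (0, 0) → a' p = 0 := by
    intro p hp1 hp0
    have h := congrArg (fun f : B => f (p.1 + 1, p.2)) c2
    simp only [Finsupp.add_apply, Finsupp.smul_apply, br_apply_pt, Finsupp.zero_apply,
      smul_eq_mul] at h
    have h2 : (a'.sum fun q c => if q = p then c * coef q (1, 0) else 0)
        + lam' * L 1 0 (p.1 + 1, p.2) = 0 := by
      refine Eq.trans ?_ h
      congr 1
      refine Finsupp.sum_congr fun q _ => if_congr ?_ rfl rfl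
      rw [Prod.ext_iff, Prod.ext_iff]; constructor <;> (rintro ⟨u, v⟩; constructor <;> omega)
    have hne : ((1 : ℤ), (0 : ℕ)) ≠ (p.1 + 1, p.2) := by
      rw [Ne, Prod.ext_iff]
      rintro ⟨u, v⟩
      exact hp0 (by rw [Prod.ext_iff]; constructor <;> [omega; exact v.symm])
    rw [sum_point _ _ _ (by ring)] at h2
    have hL : L 1 0 (p.1 + 1, p.2) = 0 := by
      simp [L, Finsupp.single_apply, hne]
    rw [hL, mul_zero, add_zero] at h2
    have hc : coef p (1, 0) ≠ 0 := by
      simp only [coef]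
      intro hc
      rw [Int.cast_eq_zero] at hc
      simp at hc
      omega
    exact (mul_eq_zero.mp h2).resolve_right hc
  have hA'0 : a' (0, 0) = lam' := by
    have h := congrArg (fun f : B => f ((1 : ℤ), (0 : ℕ))) c2
    simp only [Finsupp.add_apply, Finsupp.smul_apply, br_apply_pt, Finsupp.zero_apply,
      smul_eq_mul] at h
    have h2 : (a'.sum fun q c => if q = ((0 : ℤ), (0 : ℕ)) then c * coef q (1, 0) else 0)
        + lam' * L 1 0 (1, 0) = 0 := by
      refine Eq.trans ?_ h
      congr 1
      refine Finsupp.sum_congr fun q _ => if_congr ?_ rfl rfl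
      rw [Prod.ext_iff, Prod.ext_iff]; constructor <;> (rintro ⟨u, v⟩; constructor <;> omega)
    rw [sum_point _ _ _ (by ring)] at h2
    have hc : coef ((0 : ℤ), (0 : ℕ)) (1, 0) = -1 := by norm_num [coef]
    have hL : L 1 0 ((1 : ℤ), (0 : ℕ)) = 1 := by simp [L]
    rw [hc, hL] at h2
    linear_combination -h2
  -- key: a'(1,i) * coef (1,i) (β,j) = 0
  have F2 : ∀ i : ℕ, a' (1, i) * coef (1, i) (β, j) = 0 := by
    intro i
    have h := F1 (i + j)
    rw [hD'β, ha' (L β j), dmap_L] at h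
    simp only [Finsupp.add_apply, Finsupp.smul_apply, br_apply_pt, smul_eq_mul] at h
    have h2 : (a'.sum fun q c => if q = ((1 : ℤ), i) then c * coef q (β, j) else 0)
        + lam' * ((β : ℂ) * L β j (β + 1, i + j)) = 0 := by
      refine Eq.trans ?_ h
      congr 1
      refine Finsupp.sum_congr fun q _ => if_congr ?_ rfl rfl
      rw [Prod.ext_iff, Prod.ext_iff]; constructor <;> (rintro ⟨u, v⟩; constructor <;> omega)
    have hne : ((β, j) : ℤ × ℕ) ≠ (β + 1, i + j) := by
      rw [Ne, Prod.ext_iff]; rintro ⟨u, -⟩; omega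
    have hL : L β j ((β + 1 : ℤ), i + j) = 0 := by
      simp [L, Finsupp.single_apply, hne]
    rw [sum_point _ _ _ (by ring), hL, mul_zero, mul_zero, add_zero] at h2
    exact h2
  -- final assembly
  refine ⟨-lam', ?_⟩
  rw [hD'β, ha' (L β j), dmap_L, br_apply]
  have hbr : (a'.sum fun p c => (c * coef p (β, j)) • L (p.1 + β) (p.2 + j))
      = (lam' * coef (0, 0) (β, j)) • L β j := by
    rw [Finsupp.sum, Finset.sum_eq_single ((0 : ℤ), (0 : ℕ))]
    · have h00 : a' 0 = lam' := hA'0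
      simp [hA'0, h00]
    · intro p hp hne
      have hp' : a' p ≠ 0 := Finsupp.mem_support_iff.mp hp
      have hp1 : p.1 = 1 := by
        by_contra hc
        exact hp' (hA' p hc hne)
      have hz : a' p * coef p (β, j) = 0 := by
        have := F2 p.2
        rwa [← hp1, Prod.mk.eta] at this
      simp [hz]
    · intro h
      have h00 : a' 0 = 0 := Finsupp.notMem_support_iff.mp h
      simp [Finsupp.notMem_support_iff.mp h, h00]
  rw [hbr, smul_smul, ← add_smul]
  congr 1
  have hc : coef (0, 0) (β, j) = (-(j : ℂ) - β) := by
    simp only [coef]; push_cast; ring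
  rw [hc]; ring
end
end

section
/- Let D = ad(Σ a_{α,i} L_{α,i}) + λ d be a derivation of 𝓑 (finitely many a_{α,i} nonzero) with D(L_{p,0} + L_{−2p,2p}) = 0 for some p ∈ ℕ, p ≥ 1. Then λ = 0 and a_{α,i} = 0 for all (α,i) with α + i ∉ p ℤ≥0 or (α,i) = (0,0). -/
noncomputable section

lemma br_apply_le (a : B) (β : ℤ) (j : ℕ) (γ : ℤ) (k : ℕ) (hjk : j ≤ k) :
    br a (L β j) (γ, k) = a (γ - β, k - j) * coef (γ - β, k - j) (β, j) := by
  rw [br, Finsupp.lsum_apply, L, LinearMap.finsupp_sum_apply, Finsupp.sum_apply]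
  simp only [LinearMap.toSpanSingleton_apply, LinearMap.smul_apply, Finsupp.lsum_single,
    Finsupp.smul_apply, Finsupp.single_apply, smul_eq_mul, mul_ite, mul_one, mul_zero, one_smul]
  have step : ∀ (r : ℤ × ℕ) (c : ℂ),
      c * (coef r (β, j) * (L (r.1 + β) (r.2 + j)) (γ, k))
        = if r = (γ - β, k - j) then c * coef r (β, j) else 0 := by
    rintro ⟨r1, r2⟩ c
    rw [L, Finsupp.single_apply]
    simp only [Prod.mk.injEq]
    have hcond : ((r1 + β = γ ∧ r2 + j = k)) ↔ ((r1 = γ - β ∧ r2 = k - j)) := by omega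
    simp only [hcond]
    split_ifs <;> ring
  rw [Finsupp.sum_congr (g2 := fun r c => if r = (γ - β, k - j) then c * coef r (β, j) else 0)
    (fun r _ => step r (a r)), Finsupp.sum_ite_eq']
  split_ifs with hs
  · rfl
  · rw [Finsupp.notMem_support_iff.mp hs, zero_mul]

lemma br_apply_lt (a : B) (β : ℤ) (j : ℕ) (γ : ℤ) (k : ℕ) (hjk : k < j) :
    br a (L β j) (γ, k) = 0 := by
  rw [br, Finsupp.lsum_apply, L, LinearMap.finsupp_sum_apply, Finsupp.sum_apply]
  simp only [LinearMap.toSpanSingleton_apply, LinearMap.smul_apply, Finsupp.lsum_single,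
    Finsupp.smul_apply, smul_eq_mul, one_smul]
  rw [Finsupp.sum]
  apply Finset.sum_eq_zero
  intro r _
  rw [L, Finsupp.single_apply, if_neg, mul_zero, mul_zero]
  intro hh
  have := (Prod.ext_iff.mp hh).2
  simp only at this; omega

lemma L_apply' (β : ℤ) (j : ℕ) (q : ℤ × ℕ) :
    L β j q = if (β, j) = q then 1 else 0 := Finsupp.single_apply

theorem der_killing_special_sum (p : ℕ) (hp : 1 ≤ p) (a : B) (lam : ℂ)
    (h : br a (L (p : ℤ) 0 + L (-(2 * p : ℤ)) (2 * p))
          + lam • dmap (L (p : ℤ) 0 + L (-(2 * p : ℤ)) (2 * p)) = 0) :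
    lam = 0 ∧
    ∀ (α : ℤ) (i : ℕ),
      ((¬ ∃ n : ℕ, α + (i : ℤ) = (p : ℤ) * n) ∨ (α, i) = ((0 : ℤ), (0 : ℕ))) →
      a (α, i) = 0 := by
  have H0 : ∀ q : ℤ × ℕ,
      br a (L (p : ℤ) 0) q + br a (L (-(2 * p : ℤ)) (2 * p)) q
        + lam * ((p : ℂ) * L (p : ℤ) 0 q
            + (-(2 * (p : ℂ))) * L (-(2 * p : ℤ)) (2 * p) q) = 0 := by
    intro q
    have h' := congrArg (fun f : B => f q) h
    simp only [map_add, Finsupp.add_apply, Finsupp.smul_apply, dmap_L, smul_eq_mul,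
      Finsupp.coe_zero, Pi.zero_apply, Finsupp.coe_smul, Pi.smul_apply] at h'
    push_cast at h'
    linear_combination h'
  -- bound on second coordinates of the support
  set M : ℕ := (a.support.sup Prod.snd) + 1 with hMdef
  have hM : ∀ (α : ℤ) (i : ℕ), M ≤ i → a (α, i) = 0 := by
    intro α i hi
    by_contra hne
    have hmem : (α, i) ∈ a.support := Finsupp.mem_support_iff.mpr hne
    have := Finset.le_sup (f := Prod.snd) hmem
    omega
  -- the chain argument
  have key : ∀ m : ℕ, ∀ (α : ℤ) (i : ℕ),
      (¬ ∃ n : ℕ, α + (i : ℤ) = (p : ℤ) * n) → M ≤ i + m → a (α, i) = 0 := by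
    intro m
    induction m with
    | zero => intro α i _ hi; exact hM α i (by omega)
    | succ m ih =>
      intro α i hs hi
      by_cases hc : M ≤ i + m
      · exact ih α i hs hc
      · -- use the relation at (α - 2p, i + 2p)
        have rel := H0 (α - 2 * (p : ℤ), i + 2 * p)
        rw [br_apply_le a _ 0 _ _ (Nat.zero_le _),
            br_apply_le a _ (2 * p) _ _ (Nat.le_add_left _ _)] at rel
        simp only [Nat.sub_zero] at rel
        have e1 : ((α - 2 * (p : ℤ)) - (-(2 * p : ℤ)), i + 2 * p - 2 * p) = (α, i) := by
          refine Prod.ext ?_ ?_ <;> simp <;> omega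
        rw [e1] at rel
        have e2 : (L (p : ℤ) 0) (α - 2 * (p : ℤ), i + 2 * p) = 0 := by
          rw [L_apply', if_neg]
          intro hh
          have := (Prod.ext_iff.mp hh).2
          simp only at this
          omega
        have e3 : (L (-(2 * p : ℤ)) (2 * p)) (α - 2 * (p : ℤ), i + 2 * p) = 0 := by
          rw [L_apply', if_neg]
          intro hh
          obtain ⟨h1, h2⟩ := Prod.ext_iff.mp hh
          simp only at h1 h2
          exact hs ⟨0, by push_cast; omega⟩
        rw [e2, e3] at rel
        have hprev : a (α - 2 * (p : ℤ) - (p : ℤ), i + 2 * p) = 0 := by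
          have e4 : α - 2 * (p : ℤ) - (p : ℤ) = α - 3 * (p : ℤ) := by ring
          rw [e4]
          apply ih _ _ ?_ (by omega)
          rintro ⟨n, hn⟩
          exact hs ⟨n + 1, by push_cast at hn ⊢; linarith⟩
        rw [hprev, zero_mul] at rel
        have hC2 : coef (α, i) (-(2 * p : ℤ), 2 * p) ≠ 0 := by
          rw [coef]
          rw [Int.cast_ne_zero]
          simp only
          have hs0 : α + (i : ℤ) ≠ 0 := by
            intro h0
            exact hs ⟨0, by omega⟩
          have : (α - 1) * ((2 * p : ℕ) + 1 : ℤ) - ((-(2 * p : ℤ)) - 1) * ((i : ℤ) + 1)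
              = (2 * (p : ℤ) + 1) * (α + i) := by push_cast; ring
          rw [this]
          exact mul_ne_zero (by positivity) hs0
        have := rel
        -- rel : a (α,i) * coef ... + lam * (... * 0 + ... * 0) = 0
        have rel' : a (α, i) * coef (α, i) (-(2 * p : ℤ), 2 * p) = 0 := by
          linear_combination rel
        rcases mul_eq_zero.mp rel' with h5 | h5
        · exact h5
        · exact absurd h5 hC2
  have hfin : ∀ (α : ℤ) (i : ℕ),
      (¬ ∃ n : ℕ, α + (i : ℤ) = (p : ℤ) * n) → a (α, i) = 0 :=
    fun α i hs => key M α i hs (Nat.le_add_left _ _)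
  -- lam = 0
  have hlam : lam = 0 := by
    have rel := H0 (-(2 * p : ℤ), 2 * p)
    rw [br_apply_le a _ 0 _ _ (Nat.zero_le _),
        br_apply_le a _ (2 * p) _ _ (le_refl _)] at rel
    simp only [Nat.sub_zero] at rel
    have e2 : (L (p : ℤ) 0) (-(2 * p : ℤ), 2 * p) = 0 := by
      rw [L_apply', if_neg]
      intro hh
      have := (Prod.ext_iff.mp hh).2
      simp only at this
      omega
    have e3 : (L (-(2 * p : ℤ)) (2 * p)) (-(2 * p : ℤ), 2 * p) = 1 := by
      rw [L_apply', if_pos rfl]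
    have hzero1 : a (-(2 * p : ℤ) - (p : ℤ), 2 * p) = 0 := by
      apply hfin
      rintro ⟨n, hn⟩
      have hn' : -(2 * (p : ℤ)) - (p : ℤ) + (2 * p : ℕ) = (p : ℤ) * n := hn
      push_cast at hn'
      have : (p : ℤ) ≥ 1 := by exact_mod_cast hp
      nlinarith [Int.ofNat_nonneg n]
    have hcoef0 : coef (-(2 * p : ℤ) - (-(2 * p : ℤ)), 2 * p - 2 * p) (-(2 * p : ℤ), 2 * p) = 0 := by
      rw [coef]
      have e4 : -(2 * (p : ℤ)) - (-(2 * (p : ℤ))) = 0 := by ring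
      simp only [e4, Nat.sub_self]
      push_cast
      norm_num
      ring
    rw [hzero1, zero_mul, hcoef0, mul_zero, e2, e3] at rel
    have hP : (-(2 * (p : ℂ))) ≠ 0 := by
      have hp0 : (p : ℂ) ≠ 0 := Nat.cast_ne_zero.mpr (by omega)
      simp [hp0]
    have : lam * (-(2 * (p : ℂ))) = 0 := by linear_combination rel
    rcases mul_eq_zero.mp this with h5 | h5
    · exact h5
    · exact absurd h5 hP
  refine ⟨hlam, ?_⟩
  -- a (0,0) = 0
  have h00 : a (0, 0) = 0 := by
    have rel := H0 ((p : ℤ), 0)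
    rw [br_apply_le a _ 0 _ _ (Nat.zero_le _), br_apply_lt a _ (2 * p) _ _ (by omega)] at rel
    have e1 : ((p : ℤ) - (p : ℤ), (0 : ℕ) - 0) = ((0 : ℤ), (0 : ℕ)) := by
      refine Prod.ext (by simp) (by simp)
    rw [e1] at rel
    rw [hlam, zero_mul] at rel
    have hcoef : coef ((0 : ℤ), (0 : ℕ)) ((p : ℤ), 0) ≠ 0 := by
      rw [coef]
      rw [Int.cast_ne_zero]
      simp only
      push_cast
      intro hh
      omega
    have rel' : a (0, 0) * coef ((0 : ℤ), (0 : ℕ)) ((p : ℤ), 0) = 0 := by linear_combination rel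
    rcases mul_eq_zero.mp rel' with h5 | h5
    · exact h5
    · exact absurd h5 hcoef
  intro α i hcond
  rcases hcond with hs | heq
  · exact hfin α i hs
  · rw [heq]; exact h00

end
end

section
/- Let Δ be a 2-local derivation on 𝓑 with Δ(L_{0,0}) = Δ(L_{1,0}) = Δ(L_{−1,1}) = 0. Then Δ(x) = 0 for all x ∈ 𝓑. -/
noncomputable section

/- ============ auxiliary infrastructure ============ -/

lemma BK_L_apply (α : ℤ) (i : ℕ) (r : ℤ × ℕ) : L α i r = if r = (α, i) then 1 else 0 := by
  rw [L, Finsupp.single_apply]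
  by_cases h : r = (α, i)
  · rw [if_pos h, if_pos h.symm]
  · rw [if_neg h, if_neg (fun hh => h hh.symm)]

lemma BK_brL (a : B) (q : ℤ × ℕ) :
    br a (L q.1 q.2) = a.sum fun p ap => (ap * coef p q) • L (p.1 + q.1) (p.2 + q.2) := by
  rw [br]
  simp only [Finsupp.lsum_apply, Finsupp.sum, LinearMap.sum_apply,
    LinearMap.toSpanSingleton_apply]
  apply Finset.sum_congr rfl
  intro p hp
  simp only [LinearMap.smul_apply, Finsupp.lsum_apply, L]
  rw [Finsupp.sum_single_index]
  · simp only [LinearMap.toSpanSingleton_apply, one_smul, mul_smul, mul_comm]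
    rw [smul_comm]
  · simp

lemma BK_dmap_apply (z : B) (r : ℤ × ℕ) : dmap z r = r.1 * z r := by
  rw [dmap]
  simp only [Finsupp.lsum_apply, LinearMap.toSpanSingleton_apply]
  rw [Finsupp.sum_apply]
  rw [Finsupp.sum_eq_single r]
  · simp [L, Finsupp.single_apply, mul_comm]
  · intro p hp hne
    simp only [LinearMap.toSpanSingleton_apply, L, Finsupp.smul_apply, Finsupp.single_apply]
    rw [if_neg]
    · simp
    · intro h; exact hne (by rw [← h])
  · intro h; simp [L, h]

lemma BK_brL_apply (a : B) (q r : ℤ × ℕ) :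
    (br a (L q.1 q.2)) r =
      if q.2 ≤ r.2 then a (r.1 - q.1, r.2 - q.2) * coef (r.1 - q.1, r.2 - q.2) q else 0 := by
  rw [BK_brL, Finsupp.sum_apply]
  by_cases h : q.2 ≤ r.2
  · rw [if_pos h]
    set p0 : ℤ × ℕ := (r.1 - q.1, r.2 - q.2) with hp0
    have hkey : (p0.1 + q.1, p0.2 + q.2) = r := by
      apply Prod.ext
      · simp [hp0]
      · simp only [hp0]; omega
    rw [Finsupp.sum_eq_single p0]
    · rw [Finsupp.smul_apply, BK_L_apply, if_pos hkey.symm]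
      simp
    · intro p hp hne
      rw [Finsupp.smul_apply, BK_L_apply, if_neg, smul_zero]
      intro hh
      apply hne
      have h1 : p.1 = p0.1 := by
        have := congrArg Prod.fst hh; simp only [hp0] at this ⊢; omega
      have h2 : p.2 = p0.2 := by
        have := congrArg Prod.snd hh
        simp only [hp0] at this ⊢
        omega
      exact Prod.ext h1 h2
    · intro h0; simp [h0]
  · rw [if_neg h]
    rw [Finsupp.sum]
    apply Finset.sum_eq_zero
    intro p hp
    rw [Finsupp.smul_apply, BK_L_apply, if_neg, smul_zero]
    intro hh
    have := congrArg Prod.snd hh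
    simp at this
    omega

lemma BK_br_supp {a x : B} {r : ℤ × ℕ} (h : (br a x) r ≠ 0) :
    ∃ p ∈ a.support, ∃ q ∈ x.support, r = (p.1 + q.1, p.2 + q.2) := by
  by_contra hcon
  push_neg at hcon
  apply h
  have hexp : br a x = a.sum fun p ap => ap •
      (x.sum fun q xq => (xq * coef p q) • L (p.1 + q.1) (p.2 + q.2)) := by
    rw [br]
    simp only [Finsupp.lsum_apply, Finsupp.sum, LinearMap.sum_apply,
      LinearMap.toSpanSingleton_apply]
    apply Finset.sum_congr rfl
    intro p hp
    rw [LinearMap.smul_apply]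
    congr 1
    rw [Finsupp.lsum_apply]
    rw [Finsupp.sum]
    apply Finset.sum_congr rfl
    intro q hq
    rw [LinearMap.toSpanSingleton_apply, mul_smul]
  rw [hexp, Finsupp.sum_apply, Finsupp.sum]
  apply Finset.sum_eq_zero
  intro p hp
  rw [Finsupp.smul_apply, Finsupp.sum_apply, Finsupp.sum]
  rw [Finset.sum_eq_zero, smul_zero]
  intro q hq
  rw [Finsupp.smul_apply, BK_L_apply, if_neg, smul_zero]
  intro hh
  exact hcon p hp q hq hh


lemma BK_brL_apply' (a : B) (α : ℤ) (i : ℕ) (r : ℤ × ℕ) :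
    (br a (L α i)) r =
      if i ≤ r.2 then a (r.1 - α, r.2 - i) * coef (r.1 - α, r.2 - i) (α, i) else 0 :=
  BK_brL_apply a (α, i) r

lemma BK_eval1 {a : B} {lam : ℂ} {α : ℤ} {i : ℕ}
    (h : br a (L α i) + lam • dmap (L α i) = 0) (r : ℤ × ℕ) :
    (br a (L α i)) r + lam * (r.1 * (L α i) r) = 0 := by
  have := congrArg (fun f : B => f r) h
  simpa [Finsupp.add_apply, Finsupp.smul_apply, BK_dmap_apply, smul_eq_mul, mul_assoc] using this

lemma BK_eval2 {a : B} {lam : ℂ} {α1 α2 : ℤ} {i1 i2 : ℕ}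
    (h : br a (L α1 i1 + L α2 i2) + lam • dmap (L α1 i1 + L α2 i2) = 0) (r : ℤ × ℕ) :
    (br a (L α1 i1)) r + (br a (L α2 i2)) r
      + lam * (r.1 * ((L α1 i1) r + (L α2 i2) r)) = 0 := by
  have h2 : br a (L α1 i1 + L α2 i2) = br a (L α1 i1) + br a (L α2 i2) := map_add _ _ _
  rw [h2] at h
  have := congrArg (fun f : B => f r) h
  simpa [Finsupp.add_apply, Finsupp.smul_apply, BK_dmap_apply, smul_eq_mul,
    mul_add, mul_assoc] using this

lemma BK_eval2eq {c b : B} {mu : ℂ} {α1 α2 : ℤ} {i1 i2 : ℕ}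
    (h : br c (L α1 i1 + L α2 i2) = br b (L α1 i1 + L α2 i2) + mu • dmap (L α1 i1 + L α2 i2))
    (r : ℤ × ℕ) :
    (br c (L α1 i1)) r + (br c (L α2 i2)) r
      = (br b (L α1 i1)) r + (br b (L α2 i2)) r
        + mu * (r.1 * ((L α1 i1) r + (L α2 i2) r)) := by
  have h2 : br c (L α1 i1 + L α2 i2) = br c (L α1 i1) + br c (L α2 i2) := map_add _ _ _
  have h3 : br b (L α1 i1 + L α2 i2) = br b (L α1 i1) + br b (L α2 i2) := map_add _ _ _
  rw [h2, h3] at h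
  have := congrArg (fun f : B => f r) h
  simpa [Finsupp.add_apply, Finsupp.smul_apply, BK_dmap_apply, smul_eq_mul,
    mul_add, mul_assoc] using this

lemma BK_pairA {a : B} {lam : ℂ} (h : br a (L (-1) 1) + lam • dmap (L (-1) 1) = 0) :
    lam = 0 ∧ ∀ p : ℤ × ℕ, p.1 + (p.2 : ℤ) ≠ 0 → a p = 0 := by
  have hl : lam = 0 := by
    have h0 := BK_eval1 h (-1, 1)
    rw [BK_brL_apply'] at h0
    norm_num at h0
    rw [BK_L_apply, if_pos rfl] at h0
    have hc : coef (0, 0) (-1, 1) = 0 := by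
      rw [coef]
      norm_num
    rw [hc] at h0
    have : -(lam * 1) = 0 := by linear_combination h0
    simpa using this
  refine ⟨hl, fun p hp => ?_⟩
  have h0 := BK_eval1 h (p.1 - 1, p.2 + 1)
  rw [BK_brL_apply'] at h0
  have hle : (1 : ℕ) ≤ (p.1 - 1, p.2 + 1).2 := by simp
  rw [if_pos hle] at h0
  have hpt : ((p.1 - 1, p.2 + 1).1 - (-1), (p.1 - 1, p.2 + 1).2 - 1) = p := by
    apply Prod.ext <;> simp
  rw [hpt] at h0
  have hL : (L (-1) 1) (p.1 - 1, p.2 + 1) = 0 := by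
    rw [BK_L_apply, if_neg]
    intro hh
    have h1 := congrArg Prod.fst hh
    have h2 := congrArg Prod.snd hh
    simp at h1 h2
    apply hp
    rw [h1, h2]
    norm_num
  rw [hL, hl] at h0
  norm_num at h0
  rcases h0 with h0 | h0
  · exact h0
  · exfalso
    apply hp
    rw [coef] at h0
    have hz : ((p.1 - 1) * ((1 : ℕ) + 1) - ((-1 : ℤ) - 1) * ((p.2 : ℤ) + 1) : ℤ) = 0 := by
      exact_mod_cast h0
    push_cast at hz
    omega

lemma BK_pairB {b : B} {mu : ℂ} (h : br b (L 1 0) + mu • dmap (L 1 0) = 0) :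
    mu = b (0, 0) ∧ ∀ p : ℤ × ℕ, p ≠ (0, 0) → p.1 ≠ 1 → b p = 0 := by
  constructor
  · have h0 := BK_eval1 h (1, 0)
    rw [BK_brL_apply'] at h0
    norm_num at h0
    rw [BK_L_apply, if_pos rfl] at h0
    have hc : coef (0, 0) (1, 0) = -1 := by
      rw [coef]
      norm_num
    rw [hc] at h0
    have hb : b 0 = b (0,0) := rfl
    linear_combination h0
  · intro p hp0 hp1
    have h0 := BK_eval1 h (p.1 + 1, p.2)
    rw [BK_brL_apply'] at h0
    have hle : (0 : ℕ) ≤ (p.1 + 1, p.2).2 := by simp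
    rw [if_pos hle] at h0
    have hpt : ((p.1 + 1, p.2).1 - 1, (p.1 + 1, p.2).2 - 0) = p := by
      apply Prod.ext <;> simp
    rw [hpt] at h0
    have hL : (L 1 0) (p.1 + 1, p.2) = 0 := by
      rw [BK_L_apply, if_neg]
      intro hh
      have h1 := congrArg Prod.fst hh
      have h2 := congrArg Prod.snd hh
      simp at h1 h2
      exact hp0 (Prod.ext h1 h2)
    rw [hL] at h0
    norm_num at h0
    rcases h0 with h0 | h0
    · exact h0
    · exfalso
      apply hp1
      rw [coef] at h0
      have hz : ((p.1 - 1) * ((0 : ℕ) + 1) - ((1 : ℤ) - 1) * ((p.2 : ℤ) + 1) : ℤ) = 0 := by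
        exact_mod_cast h0
      push_cast at hz
      omega


lemma BK_castsub {m n : ℕ} (h : n ≤ m) : ((m - n : ℕ) : ℤ) = (m : ℤ) - n := by omega

lemma BK_yzero (Δ : B → B) (hΔ : Is2Local Δ)
    (hDer : ∀ D : B →ₗ[ℂ] B, IsDer D →
      ∃ (a : B) (lam : ℂ), ∀ x : B, D x = br a x + lam • dmap x)
    (h1 : Δ (L 1 0) = 0) (h2 : Δ (L (-1) 1) = 0)
    (A1 A2 : ℤ) (N1 N2 : ℕ)
    (hd : A1 + 2 ≤ A2)
    (hψ1 : A1 + (N1 : ℤ) ≠ 0)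
    (hψψ : A1 + (N1 : ℤ) ≠ A2 + (N2 : ℤ))
    (hdet : (N1 : ℤ) * A2 ≠ (N2 : ℤ) * A1)
    (hA1 : A1 ≠ 0) :
    Δ (L A1 N1 + L A2 N2) = 0 := by
  obtain ⟨D, hD, hDy, hD2⟩ := hΔ (L A1 N1 + L A2 N2) (L (-1) 1)
  obtain ⟨c, lc, hcrep⟩ := hDer D hD
  have hc0 : br c (L (-1) 1) + lc • dmap (L (-1) 1) = 0 := by
    rw [← hcrep, ← hD2]; exact h2
  obtain ⟨hlc, hcsup⟩ := BK_pairA hc0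
  have hyc : Δ (L A1 N1 + L A2 N2) = br c (L A1 N1 + L A2 N2) := by
    rw [hDy, hcrep, hlc]; simp
  obtain ⟨D', hD', hDy', hD1'⟩ := hΔ (L A1 N1 + L A2 N2) (L 1 0)
  obtain ⟨b, mu, hbrep⟩ := hDer D' hD'
  have hb0 : br b (L 1 0) + mu • dmap (L 1 0) = 0 := by
    rw [← hbrep, ← hD1']; exact h1
  obtain ⟨hmu, hbsup⟩ := BK_pairB hb0
  have hE : br c (L A1 N1 + L A2 N2)
      = br b (L A1 N1 + L A2 N2) + mu • dmap (L A1 N1 + L A2 N2) := by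
    rw [← hyc, hDy', hbrep]
  -- ==== Claim 1 : antidiagonal coefficients with n ≥ 1 vanish ====
  have claim1 : ∀ n : ℕ, 0 < n → c (-(n : ℤ), n) = 0 := by
    intro n hn
    have h0 := BK_eval2eq hE (-(n : ℤ) + A1, n + N1)
    -- term c1 : br c (L A1 N1) at r
    rw [BK_brL_apply' c A1 N1, if_pos (by simp : N1 ≤ (-(n : ℤ) + A1, n + N1).2)] at h0
    have hpt1 : ((-(n : ℤ) + A1, n + N1).1 - A1, (-(n : ℤ) + A1, n + N1).2 - N1)
        = (-(n : ℤ), n) := by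
      apply Prod.ext
      · simp
      · simp
    rw [hpt1] at h0
    -- term c2 : br c (L A2 N2) at r  → 0
    have hc2 : (br c (L A2 N2)) (-(n : ℤ) + A1, n + N1) = 0 := by
      rw [BK_brL_apply' c A2 N2]
      by_cases hcase : N2 ≤ n + N1
      · rw [if_pos hcase]
        have : c ((-(n : ℤ) + A1, n + N1).1 - A2, (-(n : ℤ) + A1, n + N1).2 - N2) = 0 := by
          apply hcsup
          have hc := BK_castsub (m := n + N1) (n := N2) hcase
          simp only []
          push_cast [hc]
          intro hcontra
          apply hψψ
          omega
        rw [this, zero_mul]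
      · rw [if_neg hcase]
    rw [hc2] at h0
    -- term b1 → 0
    have hb1 : (br b (L A1 N1)) (-(n : ℤ) + A1, n + N1) = 0 := by
      rw [BK_brL_apply' b A1 N1, if_pos (by simp : N1 ≤ (-(n : ℤ) + A1, n + N1).2), hpt1]
      have : b (-(n : ℤ), n) = 0 := by
        apply hbsup
        · intro hh
          have := congrArg Prod.snd hh
          simp at this
          omega
        · simp only []
          omega
      rw [this, zero_mul]
    rw [hb1] at h0
    -- term b2 → 0
    have hb2 : (br b (L A2 N2)) (-(n : ℤ) + A1, n + N1) = 0 := by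
      rw [BK_brL_apply' b A2 N2]
      by_cases hcase : N2 ≤ n + N1
      · rw [if_pos hcase]
        have : b ((-(n : ℤ) + A1, n + N1).1 - A2, (-(n : ℤ) + A1, n + N1).2 - N2) = 0 := by
          apply hbsup
          · intro hh
            have := congrArg Prod.fst hh
            simp at this
            omega
          · simp only []
            omega
        rw [this, zero_mul]
      · rw [if_neg hcase]
    rw [hb2] at h0
    -- L terms → 0
    have hL1 : (L A1 N1) (-(n : ℤ) + A1, n + N1) = 0 := by
      rw [BK_L_apply, if_neg]
      intro hh
      have := congrArg Prod.snd hh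
      simp at this
      omega
    have hL2 : (L A2 N2) (-(n : ℤ) + A1, n + N1) = 0 := by
      rw [BK_L_apply, if_neg]
      intro hh
      have := congrArg Prod.fst hh
      simp at this
      omega
    rw [hL1, hL2] at h0
    norm_num at h0
    rcases h0 with h0 | h0
    · exact h0
    · exfalso
      rw [coef] at h0
      have hz : ((-(n : ℤ) - 1) * ((N1 : ℤ) + 1) - (A1 - 1) * ((n : ℤ) + 1) : ℤ) = 0 := by
        exact_mod_cast h0
      have hfac : ((-(n : ℤ) - 1) * ((N1 : ℤ) + 1) - (A1 - 1) * ((n : ℤ) + 1) : ℤ)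
          = -((n : ℤ) + 1) * (A1 + N1) := by ring
      rw [hfac] at hz
      rcases mul_eq_zero.mp hz with hz1 | hz2
      · omega
      · exact hψ1 hz2
  -- ==== Claim 2 : evaluations at Q1 and Q2 ====
  have hk1 : coef (0, 0) (A1, N1) = -((A1 : ℂ) + (N1 : ℂ)) := by
    rw [coef]; push_cast; ring
  have hk2 : coef (0, 0) (A2, N2) = -((A2 : ℂ) + (N2 : ℂ)) := by
    rw [coef]; push_cast; ring
  have hptQ1 : ((A1 : ℤ) - A1, N1 - N1) = ((0 : ℤ), (0 : ℕ)) := by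
    apply Prod.ext
    · simp
    · simp
  have hptQ2 : ((A2 : ℤ) - A2, N2 - N2) = ((0 : ℤ), (0 : ℕ)) := by
    apply Prod.ext
    · simp
    · simp
  have hE1 : c (0, 0) * coef (0, 0) (A1, N1)
      = b (0, 0) * coef (0, 0) (A1, N1) + mu * A1 := by
    have h0 := BK_eval2eq hE (A1, N1)
    rw [BK_brL_apply' c A1 N1, if_pos (le_refl N1)] at h0
    rw [BK_brL_apply' b A1 N1, if_pos (le_refl N1)] at h0
    have : ((A1, N1).1 - A1, (A1, N1).2 - N1) = ((0:ℤ), (0:ℕ)) := hptQ1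
    rw [this] at h0
    -- second terms vanish
    have hc2 : (br c (L A2 N2)) (A1, N1) = 0 := by
      rw [BK_brL_apply' c A2 N2]
      by_cases hcase : N2 ≤ N1
      · rw [if_pos hcase]
        have : c ((A1, N1).1 - A2, (A1, N1).2 - N2) = 0 := by
          apply hcsup
          have hc := BK_castsub (m := N1) (n := N2) hcase
          simp only []
          push_cast [hc]
          intro hcontra
          exact hψψ (by omega)
        rw [this, zero_mul]
      · rw [if_neg hcase]
    have hb2 : (br b (L A2 N2)) (A1, N1) = 0 := by
      rw [BK_brL_apply' b A2 N2]
      by_cases hcase : N2 ≤ N1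
      · rw [if_pos hcase]
        have : b ((A1, N1).1 - A2, (A1, N1).2 - N2) = 0 := by
          apply hbsup
          · intro hh
            have := congrArg Prod.fst hh
            simp at this
            omega
          · simp only []
            omega
        rw [this, zero_mul]
      · rw [if_neg hcase]
    rw [hc2, hb2] at h0
    have hL1 : (L A1 N1) (A1, N1) = 1 := by rw [BK_L_apply, if_pos rfl]
    have hL2 : (L A2 N2) (A1, N1) = 0 := by
      rw [BK_L_apply, if_neg]
      intro hh
      have := congrArg Prod.fst hh
      simp at this
      omega
    rw [hL1, hL2] at h0
    norm_num at h0
    linear_combination h0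
  have hE2 : c (0, 0) * coef (0, 0) (A2, N2)
      = b (0, 0) * coef (0, 0) (A2, N2) + mu * A2 := by
    have h0 := BK_eval2eq hE (A2, N2)
    rw [BK_brL_apply' c A2 N2, if_pos (le_refl N2)] at h0
    rw [BK_brL_apply' b A2 N2, if_pos (le_refl N2)] at h0
    rw [hptQ2] at h0
    have hc1 : (br c (L A1 N1)) (A2, N2) = 0 := by
      rw [BK_brL_apply' c A1 N1]
      by_cases hcase : N1 ≤ N2
      · rw [if_pos hcase]
        have : c ((A2, N2).1 - A1, (A2, N2).2 - N1) = 0 := by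
          apply hcsup
          have hc := BK_castsub (m := N2) (n := N1) hcase
          simp only []
          push_cast [hc]
          intro hcontra
          exact hψψ (by omega)
        rw [this, zero_mul]
      · rw [if_neg hcase]
    have hb1 : (br b (L A1 N1)) (A2, N2) = 0 := by
      rw [BK_brL_apply' b A1 N1]
      by_cases hcase : N1 ≤ N2
      · rw [if_pos hcase]
        have : b ((A2, N2).1 - A1, (A2, N2).2 - N1) = 0 := by
          apply hbsup
          · intro hh
            have := congrArg Prod.fst hh
            simp at this
            omega
          · simp only []
            omega
        rw [this, zero_mul]
      · rw [if_neg hcase]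
    rw [hc1, hb1] at h0
    have hL1 : (L A1 N1) (A2, N2) = 0 := by
      rw [BK_L_apply, if_neg]
      intro hh
      have := congrArg Prod.fst hh
      simp at this
      omega
    have hL2 : (L A2 N2) (A2, N2) = 1 := by rw [BK_L_apply, if_pos rfl]
    rw [hL1, hL2] at h0
    norm_num at h0
    linear_combination h0
  -- solve the linear system
  have hdetC : ((N1 : ℂ) * A2 - (N2 : ℂ) * A1) ≠ 0 := by
    intro heq
    apply hdet
    have : (((N1 : ℤ) * A2 : ℤ) : ℂ) = (((N2 : ℤ) * A1 : ℤ) : ℂ) := by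
      push_cast
      linear_combination heq
    exact_mod_cast this
  rw [hk1] at hE1
  rw [hk2] at hE2
  rw [hmu] at hE1 hE2
  have hu : (b (0, 0) - c (0, 0)) * ((N1 : ℂ) * A2 - (N2 : ℂ) * A1) = 0 := by
    linear_combination (A2 : ℂ) * hE1 - (A1 : ℂ) * hE2
  have hbc : b (0, 0) = c (0, 0) := by
    rcases mul_eq_zero.mp hu with h' | h'
    · exact sub_eq_zero.mp h'
    · exact absurd h' hdetC
  have hb00 : b (0, 0) = 0 := by
    have hA1C : (A1 : ℂ) ≠ 0 := Int.cast_ne_zero.mpr hA1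
    have := hE1
    rw [← hbc] at this
    have hmuA : b (0, 0) * (A1 : ℂ) = 0 := by linear_combination -this
    rcases mul_eq_zero.mp hmuA with h' | h'
    · exact h'
    · exact absurd h' hA1C
  have hc00 : c (0, 0) = 0 := by rw [← hbc]; exact hb00
  -- c = 0
  have hczero : c = 0 := by
    ext p
    rw [Finsupp.coe_zero, Pi.zero_apply]
    by_cases hψ : p.1 + (p.2 : ℤ) = 0
    · have hp : p = (-(p.2 : ℤ), p.2) := by
        apply Prod.ext
        · simp only []; omega
        · rfl
      rcases Nat.eq_zero_or_pos p.2 with h' | h'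
      · have : p = ((0 : ℤ), (0 : ℕ)) := by
          apply Prod.ext
          · simp only []; omega
          · exact h'
        rw [this]; exact hc00
      · rw [hp]; exact claim1 p.2 h'
    · exact hcsup p hψ
  rw [hyc, hczero]
  rw [map_zero]
  rfl


lemma BK_stabR (V : ℤ) (hV : 2 ≤ V) (ρ : ℕ) (hρ : ρ.Prime) (hρV : V + 2 < (ρ : ℤ))
    (a : B) (lam : ℂ)
    (h : br a (L V (ρ - 1) + L (3 * V - 1) (3 * ρ - 2))
        + lam • dmap (L V (ρ - 1) + L (3 * V - 1) (3 * ρ - 2)) = 0) :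
    lam = 0 ∧ ∀ p ∈ a.support, V ≤ p.1 := by
  have hρ2 : 2 ≤ ρ := hρ.two_le
  have hcast1 : ((ρ - 1 : ℕ) : ℤ) = (ρ : ℤ) - 1 := by omega
  have hcast2 : ((3 * ρ - 2 : ℕ) : ℤ) = 3 * (ρ : ℤ) - 2 := by omega
  -- Step A
  have key : ∀ p : ℤ × ℕ, p ∈ a.support → p ≠ ((0 : ℤ), (0 : ℕ)) → V ≤ p.1 := by
    by_cases hS : (a.support.erase ((0 : ℤ), (0 : ℕ))).Nonempty
    case neg =>
      intro p hp hp0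
      exact absurd (Finset.mem_erase.mpr ⟨hp0, hp⟩) (fun hmem => hS ⟨p, hmem⟩)
    case pos =>
      have hT : ((a.support.erase ((0 : ℤ), (0 : ℕ))).image
          (fun p : ℤ × ℕ => p.1)).Nonempty := hS.image _
      obtain ⟨p, hpS, hpA⟩ := Finset.mem_image.mp
        (((a.support.erase ((0 : ℤ), (0 : ℕ))).image (fun p : ℤ × ℕ => p.1)).min'_mem hT)
      have hmin : ∀ q ∈ a.support.erase ((0 : ℤ), (0 : ℕ)), p.1 ≤ q.1 := by
        intro q hq
        rw [hpA]
        exact Finset.min'_le _ _ (Finset.mem_image.mpr ⟨q, hq, rfl⟩)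
      have hpsupp : p ∈ a.support := (Finset.mem_erase.mp hpS).2
      have hpne : p ≠ ((0 : ℤ), (0 : ℕ)) := (Finset.mem_erase.mp hpS).1
      have hVp : V ≤ p.1 := by
        by_cases hP : p = ((2 * V - 1 : ℤ), 2 * ρ - 1)
        · have := congrArg Prod.fst hP
          simp only [] at this
          omega
        · have h0 := BK_eval2 h (p.1 + V, p.2 + (ρ - 1))
          rw [BK_brL_apply' a V (ρ - 1),
            if_pos (by simp : ρ - 1 ≤ (p.1 + V, p.2 + (ρ - 1)).2)] at h0
          have hpt1 : ((p.1 + V, p.2 + (ρ - 1)).1 - V, (p.1 + V, p.2 + (ρ - 1)).2 - (ρ - 1))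
              = p := by
            apply Prod.ext
            · simp
            · simp
          rw [hpt1] at h0
          have ht2 : (br a (L (3 * V - 1) (3 * ρ - 2))) (p.1 + V, p.2 + (ρ - 1)) = 0 := by
            rw [BK_brL_apply' a (3 * V - 1) (3 * ρ - 2)]
            by_cases hcase : 3 * ρ - 2 ≤ p.2 + (ρ - 1)
            · rw [if_pos hcase]
              have hz : a ((p.1 + V, p.2 + (ρ - 1)).1 - (3 * V - 1),
                  (p.1 + V, p.2 + (ρ - 1)).2 - (3 * ρ - 2)) = 0 := by
                by_contra hnz
                have hmem : ((p.1 + V) - (3 * V - 1), (p.2 + (ρ - 1)) - (3 * ρ - 2))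
                    ∈ a.support := Finsupp.mem_support_iff.mpr hnz
                by_cases h00 : ((p.1 + V) - (3 * V - 1), (p.2 + (ρ - 1)) - (3 * ρ - 2))
                    = ((0 : ℤ), (0 : ℕ))
                · apply hP
                  have hh1 := congrArg Prod.fst h00
                  have hh2 := congrArg Prod.snd h00
                  simp only [] at hh1 hh2
                  apply Prod.ext
                  · simp only []; omega
                  · simp only []; omega
                · have hmemS : ((p.1 + V) - (3 * V - 1), (p.2 + (ρ - 1)) - (3 * ρ - 2))
                      ∈ a.support.erase ((0 : ℤ), (0 : ℕ)) :=
                    Finset.mem_erase.mpr ⟨h00, hmem⟩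
                  have := hmin _ hmemS
                  simp only [] at this
                  omega
              rw [hz, zero_mul]
            · rw [if_neg hcase]
          rw [ht2] at h0
          have hL1 : (L V (ρ - 1)) (p.1 + V, p.2 + (ρ - 1)) = 0 := by
            rw [BK_L_apply, if_neg]
            intro hh
            apply hpne
            have hh1 := congrArg Prod.fst hh
            have hh2 := congrArg Prod.snd hh
            simp only [] at hh1 hh2
            apply Prod.ext
            · simp only []; omega
            · simp only []; omega
          have hL2 : (L (3 * V - 1) (3 * ρ - 2)) (p.1 + V, p.2 + (ρ - 1)) = 0 := by
            rw [BK_L_apply, if_neg]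
            intro hh
            apply hP
            have hh1 := congrArg Prod.fst hh
            have hh2 := congrArg Prod.snd hh
            simp only [] at hh1 hh2
            apply Prod.ext
            · simp only []; omega
            · simp only []; omega
          rw [hL1, hL2] at h0
          norm_num at h0
          have hap : a p ≠ 0 := Finsupp.mem_support_iff.mp hpsupp
          rcases h0 with h0 | h0
          · exact absurd h0 hap
          · rw [coef] at h0
            have hz : ((p.1 - 1) * (((ρ - 1 : ℕ) : ℤ) + 1) - (V - 1) * ((p.2 : ℤ) + 1) : ℤ)
                = 0 := by exact_mod_cast h0
            rw [hcast1] at hz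
            have hz' : (p.1 - 1) * (ρ : ℤ) - (V - 1) * ((p.2 : ℤ) + 1) = 0 := by
              linear_combination hz
            have hρZ : Prime (ρ : ℤ) := Nat.prime_iff_prime_int.mp hρ
            have hdvd : (ρ : ℤ) ∣ (V - 1) * ((p.2 : ℤ) + 1) :=
              ⟨p.1 - 1, by linear_combination -hz'⟩
            rcases hρZ.dvd_mul.mp hdvd with hd | hd
            · exfalso
              have := Int.le_of_dvd (by omega) hd
              omega
            · obtain ⟨k, hk⟩ := hd
              have hkpos : 1 ≤ k := by nlinarith [hk]
              have hp1 : p.1 - 1 = (V - 1) * k := by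
                have hcan : (p.1 - 1) * (ρ : ℤ) = ((V - 1) * k) * (ρ : ℤ) := by
                  linear_combination hz' + (V - 1) * hk
                have hρne : (ρ : ℤ) ≠ 0 := by omega
                exact mul_right_cancel₀ hρne hcan
              nlinarith [hp1]
      intro q hq hq0
      have hqS : q ∈ a.support.erase ((0 : ℤ), (0 : ℕ)) := Finset.mem_erase.mpr ⟨hq0, hq⟩
      have := hmin q hqS
      omega
  -- Step B
  have hE1 : a ((0 : ℤ), (0 : ℕ)) * coef (0, 0) (V, ρ - 1) + lam * V = 0 := by
    have h0 := BK_eval2 h (V, ρ - 1)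
    rw [BK_brL_apply' a V (ρ - 1), if_pos (le_refl (ρ - 1))] at h0
    have hpt : (((V : ℤ), (ρ - 1 : ℕ)).1 - V, ((V : ℤ), (ρ - 1 : ℕ)).2 - (ρ - 1))
        = ((0 : ℤ), (0 : ℕ)) := by
      apply Prod.ext
      · simp
      · simp
    rw [hpt] at h0
    have ht2 : (br a (L (3 * V - 1) (3 * ρ - 2))) (V, ρ - 1) = 0 := by
      rw [BK_brL_apply' a (3 * V - 1) (3 * ρ - 2), if_neg (by simp only []; omega)]
    rw [ht2] at h0
    have hL1 : (L V (ρ - 1)) (V, ρ - 1) = 1 := by rw [BK_L_apply, if_pos rfl]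
    have hL2 : (L (3 * V - 1) (3 * ρ - 2)) (V, ρ - 1) = 0 := by
      rw [BK_L_apply, if_neg]
      intro hh
      have := congrArg Prod.fst hh
      simp only [] at this
      omega
    rw [hL1, hL2] at h0
    norm_num at h0
    linear_combination h0
  have hE2 : a ((0 : ℤ), (0 : ℕ)) * coef (0, 0) (3 * V - 1, 3 * ρ - 2)
      + lam * (3 * V - 1) = 0 := by
    have h0 := BK_eval2 h (3 * V - 1, 3 * ρ - 2)
    rw [BK_brL_apply' a V (ρ - 1),
      if_pos (by simp only []; omega : ρ - 1 ≤ ((3 * V - 1 : ℤ), (3 * ρ - 2 : ℕ)).2)] at h0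
    have hptP : (((3 * V - 1 : ℤ), (3 * ρ - 2 : ℕ)).1 - V,
        ((3 * V - 1 : ℤ), (3 * ρ - 2 : ℕ)).2 - (ρ - 1)) = ((2 * V - 1 : ℤ), (2 * ρ - 1 : ℕ)) := by
      apply Prod.ext
      · simp only []; ring
      · simp only []; omega
    rw [hptP] at h0
    have hcoefP : coef ((2 * V - 1 : ℤ), (2 * ρ - 1 : ℕ)) (V, ρ - 1) = 0 := by
      rw [coef]
      have hcast3 : ((2 * ρ - 1 : ℕ) : ℤ) = 2 * (ρ : ℤ) - 1 := by omega
      have : (((2 * V - 1 : ℤ), (2 * ρ - 1 : ℕ)).1 - 1) * (((ρ - 1 : ℕ) : ℤ) + 1)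
          - (V - 1) * ((((2 * V - 1 : ℤ), (2 * ρ - 1 : ℕ)).2 : ℤ) + 1) = 0 := by
        rw [hcast1, hcast3]
        simp only []
        ring
      rw [this]
      simp
    rw [hcoefP, mul_zero, zero_add] at h0
    rw [BK_brL_apply' a (3 * V - 1) (3 * ρ - 2), if_pos (le_refl _)] at h0
    have hpt : (((3 * V - 1 : ℤ), (3 * ρ - 2 : ℕ)).1 - (3 * V - 1),
        ((3 * V - 1 : ℤ), (3 * ρ - 2 : ℕ)).2 - (3 * ρ - 2)) = ((0 : ℤ), (0 : ℕ)) := by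
      apply Prod.ext
      · simp
      · simp
    rw [hpt] at h0
    have hL1 : (L V (ρ - 1)) (3 * V - 1, 3 * ρ - 2) = 0 := by
      rw [BK_L_apply, if_neg]
      intro hh
      have := congrArg Prod.fst hh
      simp only [] at this
      omega
    have hL2 : (L (3 * V - 1) (3 * ρ - 2)) (3 * V - 1, 3 * ρ - 2) = 1 := by
      rw [BK_L_apply, if_pos rfl]
    rw [hL1, hL2] at h0
    norm_num at h0
    linear_combination h0
  have hk1 : coef (0, 0) (V, ρ - 1) = -((V : ℂ) + (ρ : ℂ) - 1) := by
    rw [coef]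
    have : ((0 - 1) * (((ρ - 1 : ℕ) : ℤ) + 1) - (V - 1) * (((0 : ℕ) : ℤ) + 1) : ℤ)
        = -(V + (ρ : ℤ) - 1) := by rw [hcast1]; ring
    rw [this]
    push_cast
    ring
  have hk2 : coef (0, 0) (3 * V - 1, 3 * ρ - 2) = -(3 * (V : ℂ) + 3 * (ρ : ℂ) - 3) := by
    rw [coef]
    have : ((0 - 1) * (((3 * ρ - 2 : ℕ) : ℤ) + 1) - (3 * V - 1 - 1) * (((0 : ℕ) : ℤ) + 1) : ℤ)
        = -(3 * V + 3 * (ρ : ℤ) - 3) := by rw [hcast2]; ring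
    rw [this]
    push_cast
    ring
  rw [hk1] at hE1
  rw [hk2] at hE2
  have hlam : lam = 0 := by linear_combination 3 * hE1 - hE2
  have ha0 : a ((0 : ℤ), (0 : ℕ)) = 0 := by
    rw [hlam] at hE1
    have hne : -((V : ℂ) + (ρ : ℂ) - 1) ≠ 0 := by
      intro hh
      have h' : ((V + (ρ : ℤ) - 1 : ℤ) : ℂ) = 0 := by push_cast; linear_combination -hh
      have : (V + (ρ : ℤ) - 1 : ℤ) = 0 := by exact_mod_cast h'
      omega
    have hmm : a ((0 : ℤ), (0 : ℕ)) * -((V : ℂ) + (ρ : ℂ) - 1) = 0 := by linear_combination hE1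
    rcases mul_eq_zero.mp hmm with h' | h'
    · exact h'
    · exact absurd h' hne
  refine ⟨hlam, fun p hp => ?_⟩
  by_cases hp0 : p = ((0 : ℤ), (0 : ℕ))
  · exact absurd (by rw [hp0]; exact ha0) (Finsupp.mem_support_iff.mp hp)
  · exact key p hp hp0


lemma BK_stabL (V : ℤ) (hV : 2 ≤ V) (ρ : ℕ) (hρ : ρ.Prime) (hρV : V + 2 < (ρ : ℤ))
    (a : B) (lam : ℂ)
    (h : br a (L (-3 * V - 1) (3 * ρ - 2) + L (-V) (ρ - 1))
        + lam • dmap (L (-3 * V - 1) (3 * ρ - 2) + L (-V) (ρ - 1)) = 0) :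
    lam = 0 ∧ ∀ p ∈ a.support, p.1 ≤ -V := by
  have hρ2 : 2 ≤ ρ := hρ.two_le
  have hcast1 : ((ρ - 1 : ℕ) : ℤ) = (ρ : ℤ) - 1 := by omega
  have hcast2 : ((3 * ρ - 2 : ℕ) : ℤ) = 3 * (ρ : ℤ) - 2 := by omega
  -- Step A
  have key : ∀ p : ℤ × ℕ, p ∈ a.support → p ≠ ((0 : ℤ), (0 : ℕ)) → p.1 ≤ -V := by
    by_cases hS : (a.support.erase ((0 : ℤ), (0 : ℕ))).Nonempty
    case neg =>
      intro p hp hp0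
      exact absurd (Finset.mem_erase.mpr ⟨hp0, hp⟩) (fun hmem => hS ⟨p, hmem⟩)
    case pos =>
      have hT : ((a.support.erase ((0 : ℤ), (0 : ℕ))).image
          (fun p : ℤ × ℕ => p.1)).Nonempty := hS.image _
      obtain ⟨p, hpS, hpA⟩ := Finset.mem_image.mp
        (((a.support.erase ((0 : ℤ), (0 : ℕ))).image (fun p : ℤ × ℕ => p.1)).max'_mem hT)
      have hmax : ∀ q ∈ a.support.erase ((0 : ℤ), (0 : ℕ)), q.1 ≤ p.1 := by
        intro q hq
        rw [hpA]
        exact Finset.le_max' _ _ (Finset.mem_image.mpr ⟨q, hq, rfl⟩)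
      have hpsupp : p ∈ a.support := (Finset.mem_erase.mp hpS).2
      have hpne : p ≠ ((0 : ℤ), (0 : ℕ)) := (Finset.mem_erase.mp hpS).1
      have hVp : p.1 ≤ -V := by
        by_cases hP : p = ((-2 * V - 1 : ℤ), 2 * ρ - 1)
        · have := congrArg Prod.fst hP
          simp only [] at this
          omega
        · have h0 := BK_eval2 h (p.1 + -V, p.2 + (ρ - 1))
          rw [BK_brL_apply' a (-V) (ρ - 1),
            if_pos (by simp : ρ - 1 ≤ (p.1 + -V, p.2 + (ρ - 1)).2)] at h0
          have hpt1 : ((p.1 + -V, p.2 + (ρ - 1)).1 - (-V), (p.1 + -V, p.2 + (ρ - 1)).2 - (ρ - 1))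
              = p := by
            apply Prod.ext
            · simp
            · simp
          rw [hpt1] at h0
          have ht1 : (br a (L (-3 * V - 1) (3 * ρ - 2))) (p.1 + -V, p.2 + (ρ - 1)) = 0 := by
            rw [BK_brL_apply' a (-3 * V - 1) (3 * ρ - 2)]
            by_cases hcase : 3 * ρ - 2 ≤ p.2 + (ρ - 1)
            · rw [if_pos hcase]
              have hz : a ((p.1 + -V, p.2 + (ρ - 1)).1 - (-3 * V - 1),
                  (p.1 + -V, p.2 + (ρ - 1)).2 - (3 * ρ - 2)) = 0 := by
                by_contra hnz
                have hmem : ((p.1 + -V) - (-3 * V - 1), (p.2 + (ρ - 1)) - (3 * ρ - 2))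
                    ∈ a.support := Finsupp.mem_support_iff.mpr hnz
                by_cases h00 : ((p.1 + -V) - (-3 * V - 1), (p.2 + (ρ - 1)) - (3 * ρ - 2))
                    = ((0 : ℤ), (0 : ℕ))
                · apply hP
                  have hh1 := congrArg Prod.fst h00
                  have hh2 := congrArg Prod.snd h00
                  simp only [] at hh1 hh2
                  apply Prod.ext
                  · simp only []; omega
                  · simp only []; omega
                · have hmemS : ((p.1 + -V) - (-3 * V - 1), (p.2 + (ρ - 1)) - (3 * ρ - 2))
                      ∈ a.support.erase ((0 : ℤ), (0 : ℕ)) :=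
                    Finset.mem_erase.mpr ⟨h00, hmem⟩
                  have := hmax _ hmemS
                  simp only [] at this
                  omega
              rw [hz, zero_mul]
            · rw [if_neg hcase]
          rw [ht1] at h0
          have hL2 : (L (-V) (ρ - 1)) (p.1 + -V, p.2 + (ρ - 1)) = 0 := by
            rw [BK_L_apply, if_neg]
            intro hh
            apply hpne
            have hh1 := congrArg Prod.fst hh
            have hh2 := congrArg Prod.snd hh
            simp only [] at hh1 hh2
            apply Prod.ext
            · simp only []; omega
            · simp only []; omega
          have hL1 : (L (-3 * V - 1) (3 * ρ - 2)) (p.1 + -V, p.2 + (ρ - 1)) = 0 := by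
            rw [BK_L_apply, if_neg]
            intro hh
            apply hP
            have hh1 := congrArg Prod.fst hh
            have hh2 := congrArg Prod.snd hh
            simp only [] at hh1 hh2
            apply Prod.ext
            · simp only []; omega
            · simp only []; omega
          rw [hL1, hL2] at h0
          norm_num at h0
          have hap : a p ≠ 0 := Finsupp.mem_support_iff.mp hpsupp
          rcases h0 with h0 | h0
          · exact absurd h0 hap
          · rw [coef] at h0
            have hz : ((p.1 - 1) * (((ρ - 1 : ℕ) : ℤ) + 1) - (-V - 1) * ((p.2 : ℤ) + 1) : ℤ)
                = 0 := by exact_mod_cast h0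
            rw [hcast1] at hz
            have hz' : (p.1 - 1) * (ρ : ℤ) - (-V - 1) * ((p.2 : ℤ) + 1) = 0 := by
              linear_combination hz
            have hρZ : Prime (ρ : ℤ) := Nat.prime_iff_prime_int.mp hρ
            have hdvd : (ρ : ℤ) ∣ (-V - 1) * ((p.2 : ℤ) + 1) :=
              ⟨p.1 - 1, by linear_combination -hz'⟩
            rcases hρZ.dvd_mul.mp hdvd with hd | hd
            · exfalso
              have hd' : (ρ : ℤ) ∣ (V + 1) := by
                rwa [show (-V - 1 : ℤ) = -(V + 1) by ring, dvd_neg] at hd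
              have := Int.le_of_dvd (by omega) hd'
              omega
            · obtain ⟨k, hk⟩ := hd
              have hkpos : 1 ≤ k := by nlinarith [hk]
              have hp1 : p.1 - 1 = (-V - 1) * k := by
                have hcan : (p.1 - 1) * (ρ : ℤ) = ((-V - 1) * k) * (ρ : ℤ) := by
                  linear_combination hz' + (-V - 1) * hk
                have hρne : (ρ : ℤ) ≠ 0 := by omega
                exact mul_right_cancel₀ hρne hcan
              nlinarith [hp1]
      intro q hq hq0
      have hqS : q ∈ a.support.erase ((0 : ℤ), (0 : ℕ)) := Finset.mem_erase.mpr ⟨hq0, hq⟩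
      have := hmax q hqS
      omega
  -- Step B
  have hE1 : a ((0 : ℤ), (0 : ℕ)) * coef (0, 0) (-V, ρ - 1) + lam * (-V) = 0 := by
    have h0 := BK_eval2 h (-V, ρ - 1)
    rw [BK_brL_apply' a (-V) (ρ - 1), if_pos (le_refl (ρ - 1))] at h0
    have hpt : (((-V : ℤ), (ρ - 1 : ℕ)).1 - (-V), ((-V : ℤ), (ρ - 1 : ℕ)).2 - (ρ - 1))
        = ((0 : ℤ), (0 : ℕ)) := by
      apply Prod.ext
      · simp
      · simp
    rw [hpt] at h0
    have ht1 : (br a (L (-3 * V - 1) (3 * ρ - 2))) (-V, ρ - 1) = 0 := by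
      rw [BK_brL_apply' a (-3 * V - 1) (3 * ρ - 2), if_neg (by simp only []; omega)]
    rw [ht1] at h0
    have hL2 : (L (-V) (ρ - 1)) (-V, ρ - 1) = 1 := by rw [BK_L_apply, if_pos rfl]
    have hL1 : (L (-3 * V - 1) (3 * ρ - 2)) (-V, ρ - 1) = 0 := by
      rw [BK_L_apply, if_neg]
      intro hh
      have := congrArg Prod.fst hh
      simp only [] at this
      omega
    rw [hL1, hL2] at h0
    norm_num at h0
    linear_combination h0
  have hE2 : a ((0 : ℤ), (0 : ℕ)) * coef (0, 0) (-3 * V - 1, 3 * ρ - 2)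
      + lam * (-3 * V - 1) = 0 := by
    have h0 := BK_eval2 h (-3 * V - 1, 3 * ρ - 2)
    rw [BK_brL_apply' a (-V) (ρ - 1),
      if_pos (by simp only []; omega : ρ - 1 ≤ ((-3 * V - 1 : ℤ), (3 * ρ - 2 : ℕ)).2)] at h0
    have hptP : (((-3 * V - 1 : ℤ), (3 * ρ - 2 : ℕ)).1 - (-V),
        ((-3 * V - 1 : ℤ), (3 * ρ - 2 : ℕ)).2 - (ρ - 1))
        = ((-2 * V - 1 : ℤ), (2 * ρ - 1 : ℕ)) := by
      apply Prod.ext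
      · simp only []; ring
      · simp only []; omega
    rw [hptP] at h0
    have hcoefP : coef ((-2 * V - 1 : ℤ), (2 * ρ - 1 : ℕ)) (-V, ρ - 1) = 0 := by
      rw [coef]
      have hcast3 : ((2 * ρ - 1 : ℕ) : ℤ) = 2 * (ρ : ℤ) - 1 := by omega
      have : (((-2 * V - 1 : ℤ), (2 * ρ - 1 : ℕ)).1 - 1) * (((ρ - 1 : ℕ) : ℤ) + 1)
          - (-V - 1) * ((((-2 * V - 1 : ℤ), (2 * ρ - 1 : ℕ)).2 : ℤ) + 1) = 0 := by
        rw [hcast1, hcast3]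
        simp only []
        ring
      rw [this]
      simp
    rw [hcoefP, mul_zero] at h0
    rw [BK_brL_apply' a (-3 * V - 1) (3 * ρ - 2), if_pos (le_refl _)] at h0
    have hpt : (((-3 * V - 1 : ℤ), (3 * ρ - 2 : ℕ)).1 - (-3 * V - 1),
        ((-3 * V - 1 : ℤ), (3 * ρ - 2 : ℕ)).2 - (3 * ρ - 2)) = ((0 : ℤ), (0 : ℕ)) := by
      apply Prod.ext
      · simp
      · simp
    rw [hpt] at h0
    have hL1 : (L (-3 * V - 1) (3 * ρ - 2)) (-3 * V - 1, 3 * ρ - 2) = 1 := by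
      rw [BK_L_apply, if_pos rfl]
    have hL2 : (L (-V) (ρ - 1)) (-3 * V - 1, 3 * ρ - 2) = 0 := by
      rw [BK_L_apply, if_neg]
      intro hh
      have := congrArg Prod.fst hh
      simp only [] at this
      omega
    rw [hL1, hL2] at h0
    have hfst : ((-3 * V - 1, 3 * ρ - 2) : ℤ × ℕ).1 = -3 * V - 1 := rfl
    rw [hfst] at h0
    push_cast at h0
    linear_combination h0
  have hk1 : coef (0, 0) (-V, ρ - 1) = ((V : ℂ) - (ρ : ℂ) + 1) := by
    rw [coef]
    have : ((0 - 1) * (((ρ - 1 : ℕ) : ℤ) + 1) - (-V - 1) * (((0 : ℕ) : ℤ) + 1) : ℤ)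
        = (V - (ρ : ℤ) + 1) := by rw [hcast1]; ring
    rw [this]
    push_cast
    ring
  have hk2 : coef (0, 0) (-3 * V - 1, 3 * ρ - 2) = (3 * (V : ℂ) - 3 * (ρ : ℂ) + 3) := by
    rw [coef]
    have : ((0 - 1) * (((3 * ρ - 2 : ℕ) : ℤ) + 1) - (-3 * V - 1 - 1) * (((0 : ℕ) : ℤ) + 1) : ℤ)
        = (3 * V - 3 * (ρ : ℤ) + 3) := by rw [hcast2]; ring
    rw [this]
    push_cast
    ring
  rw [hk1] at hE1
  rw [hk2] at hE2
  have hlam : lam = 0 := by linear_combination 3 * hE1 - hE2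
  have ha0 : a ((0 : ℤ), (0 : ℕ)) = 0 := by
    rw [hlam] at hE1
    have hne : ((V : ℂ) - (ρ : ℂ) + 1) ≠ 0 := by
      intro hh
      have h' : ((V - (ρ : ℤ) + 1 : ℤ) : ℂ) = 0 := by push_cast; linear_combination hh
      have : (V - (ρ : ℤ) + 1 : ℤ) = 0 := by exact_mod_cast h'
      omega
    have hmm : a ((0 : ℤ), (0 : ℕ)) * ((V : ℂ) - (ρ : ℂ) + 1) = 0 := by linear_combination hE1
    rcases mul_eq_zero.mp hmm with h' | h'
    · exact h'
    · exact absurd h' hne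
  refine ⟨hlam, fun p hp => ?_⟩
  by_cases hp0 : p = ((0 : ℤ), (0 : ℕ))
  · exact absurd (by rw [hp0]; exact ha0) (Finsupp.mem_support_iff.mp hp)
  · exact key p hp hp0


theorem two_local_vanishing_everywhere (Δ : B → B) (hΔ : Is2Local Δ)
    (hDer : ∀ D : B →ₗ[ℂ] B, IsDer D →
      ∃ (a : B) (lam : ℂ), ∀ x : B, D x = br a x + lam • dmap x)
    (h0 : Δ (L 0 0) = 0) (h1 : Δ (L 1 0) = 0) (h2 : Δ (L (-1) 1) = 0) :
    ∀ x : B, Δ x = 0 := by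
  intro x
  by_cases hx : x = 0
  · obtain ⟨D, hD, hDx, _⟩ := hΔ x x
    rw [hx] at hDx
    rw [hx, hDx, map_zero]
  · have hsupp : x.support.Nonempty := Finsupp.support_nonempty_iff.mpr hx
    have hFne : (x.support.image (fun q : ℤ × ℕ => q.1)).Nonempty := hsupp.image _
    set mA := (x.support.image (fun q : ℤ × ℕ => q.1)).min' hFne with hmA
    set MA := (x.support.image (fun q : ℤ × ℕ => q.1)).max' hFne with hMA
    have hmM : mA ≤ MA := Finset.min'_le _ _ (Finset.max'_mem _ _)
    set V := MA - mA + 2 with hVdef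
    have hV : 2 ≤ V := by omega
    obtain ⟨ρ, hρge, hρ⟩ := Nat.exists_infinite_primes (V + 3).toNat
    have hρV : V + 2 < (ρ : ℤ) := by omega
    have hρ2 : 2 ≤ ρ := hρ.two_le
    have hcast1 : ((ρ - 1 : ℕ) : ℤ) = (ρ : ℤ) - 1 := by omega
    have hcast2 : ((3 * ρ - 2 : ℕ) : ℤ) = 3 * (ρ : ℤ) - 2 := by omega
    -- the right-family element has Δ-value 0
    have hy1 : Δ (L V (ρ - 1) + L (3 * V - 1) (3 * ρ - 2)) = 0 := by
      apply BK_yzero Δ hΔ hDer h1 h2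
      · omega
      · rw [hcast1]; omega
      · rw [hcast1, hcast2]; omega
      · rw [hcast1, hcast2]
        intro heq
        have : -(ρ : ℤ) - V + 1 = 0 := by linear_combination heq
        omega
      · omega
    have hy2 : Δ (L (-3 * V - 1) (3 * ρ - 2) + L (-V) (ρ - 1)) = 0 := by
      apply BK_yzero Δ hΔ hDer h1 h2
      · omega
      · rw [hcast2]; omega
      · rw [hcast1, hcast2]; omega
      · rw [hcast1, hcast2]
        intro heq
        have : (ρ : ℤ) - V - 1 = 0 := by linear_combination heq
        omega
      · omega
    -- pair x with the right-family element
    obtain ⟨D1, hD1, hD1x, hD1y⟩ := hΔ x (L V (ρ - 1) + L (3 * V - 1) (3 * ρ - 2))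
    obtain ⟨a1, l1, hrep1⟩ := hDer D1 hD1
    have hstab1 := BK_stabR V hV ρ hρ hρV a1 l1 (by rw [← hrep1, ← hD1y]; exact hy1)
    have hxrep1 : Δ x = br a1 x := by
      rw [hD1x, hrep1, hstab1.1]
      simp
    -- pair x with the left-family element
    obtain ⟨D2, hD2', hD2x, hD2y⟩ := hΔ x (L (-3 * V - 1) (3 * ρ - 2) + L (-V) (ρ - 1))
    obtain ⟨a2, l2, hrep2⟩ := hDer D2 hD2'
    have hstab2 := BK_stabL V hV ρ hρ hρV a2 l2 (by rw [← hrep2, ← hD2y]; exact hy2)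
    have hxrep2 : Δ x = br a2 x := by
      rw [hD2x, hrep2, hstab2.1]
      simp
    -- conclude
    refine Finsupp.ext fun r => ?_
    rw [Finsupp.coe_zero, Pi.zero_apply]
    by_contra hr
    obtain ⟨p, hp, q, hq, hrpq⟩ := BK_br_supp (show (br a1 x) r ≠ 0 by rw [← hxrep1]; exact hr)
    obtain ⟨p', hp', q', hq', hrpq'⟩ := BK_br_supp (show (br a2 x) r ≠ 0 by rw [← hxrep2]; exact hr)
    have hb1 : V ≤ p.1 := hstab1.2 p hp
    have hb2 : p'.1 ≤ -V := hstab2.2 p' hp'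
    have hqlow : mA ≤ q.1 := by
      rw [hmA]
      exact Finset.min'_le _ _ (Finset.mem_image.mpr ⟨q, hq, rfl⟩)
    have hqhigh : q'.1 ≤ MA := by
      rw [hMA]
      exact Finset.le_max' _ _ (Finset.mem_image.mpr ⟨q', hq', rfl⟩)
    have e1 : r.1 = p.1 + q.1 := by
      have := congrArg Prod.fst hrpq
      simpa using this
    have e2 : r.1 = p'.1 + q'.1 := by
      have := congrArg Prod.fst hrpq'
      simpa using this
    omega

end
end

section
/- If Δ is a 2-local derivation on 𝓑 with Δ(L_{0,0}) = Δ(L_{1,0}) = 0, then Δ(L_{n,0}) = 0 for all n ∈ ℤ. -/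
noncomputable section

lemma br_single (p : ℤ × ℕ) (c : ℂ) (q : ℤ × ℕ) (e : ℂ) :
    br (Finsupp.single p c) (Finsupp.single q e) =
      (c * e * coef p q) • L (p.1 + q.1) (p.2 + q.2) := by
  simp [br, Finsupp.lsum_single, LinearMap.toSpanSingleton_apply, smul_smul, mul_assoc]

lemma br_apply_s15 (x : B) (m : ℤ) (r : ℤ × ℕ) :
    (br x (L m 0)) r = x (r.1 - m, r.2) * coef (r.1 - m, r.2) (m, 0) := by
  induction x using Finsupp.induction_linear with
  | zero => simp
  | add f g hf hg => simp [hf, hg, add_mul]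
  | single p c =>
      rw [L, br_single]
      rcases r with ⟨r1, r2⟩
      rcases p with ⟨p1, p2⟩
      simp only [Finsupp.smul_apply, L, Finsupp.single_apply, Finsupp.smul_single, smul_eq_mul,
        mul_one]
      by_cases h : p1 + m = r1 ∧ p2 = r2
      · obtain ⟨h1, rfl⟩ := h
        have : p1 = r1 - m := by omega
        subst this
        simp
      · have h2 : ¬((p1 + m, p2 + 0) = (r1, r2)) := by
          simp only [Prod.mk.injEq]; omega
        have h3 : ¬((p1, p2) = (r1 - m, r2)) := by
          simp only [Prod.mk.injEq]; omega
        simp [h2, h3]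
        exact fun h4 h5 => absurd ⟨h4, h5⟩ h

lemma dmap_apply (x : B) (r : ℤ × ℕ) : dmap x r = (r.1 : ℂ) * x r := by
  induction x using Finsupp.induction_linear with
  | zero => simp
  | add f g hf hg => simp [hf, hg, mul_add]
  | single p c =>
      simp only [dmap, Finsupp.lsum_single, LinearMap.toSpanSingleton_apply, L,
        Finsupp.smul_single, smul_eq_mul, mul_one, Finsupp.smul_apply, Finsupp.single_apply]
      rcases p with ⟨p1, p2⟩; rcases r with ⟨r1, r2⟩
      by_cases h : (p1, p2) = (r1, r2)
      · simp_all [mul_comm]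
      · simp [h, Finsupp.single_apply]

theorem two_local_vanishes_on_Ln0 (Δ : B → B) (hΔ : Is2Local Δ)
    (hDer : ∀ D : B →ₗ[ℂ] B, IsDer D →
      ∃ (a : B) (lam : ℂ), ∀ x : B, D x = br a x + lam • dmap x)
    (h0 : Δ (L 0 0) = 0) (h1 : Δ (L 1 0) = 0) :
    ∀ n : ℤ, Δ (L n 0) = 0 := by
  intro n
  obtain ⟨D, hD, hx0, hxn⟩ := hΔ (L 0 0) (L n 0)
  obtain ⟨a, lam, ha⟩ := hDer D hD
  obtain ⟨D', hD', hy1, hyn⟩ := hΔ (L 1 0) (L n 0)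
  obtain ⟨b, mu, hb⟩ := hDer D' hD'
  have hD0 : br a (L 0 0) + lam • dmap (L 0 0) = 0 := by rw [← ha, ← hx0, h0]
  have hD1 : br b (L 1 0) + mu • dmap (L 1 0) = 0 := by rw [← hb, ← hy1, h1]
  -- constraint on a
  have hA : ∀ s : ℤ × ℕ, s.1 + (s.2 : ℤ) ≠ 0 → a s = 0 := by
    intro s hs
    have h := DFunLike.congr_fun hD0 s
    rw [Finsupp.add_apply, Finsupp.smul_apply, br_apply_s15, dmap_apply, smul_eq_mul] at h
    have hL : (L 0 0) s = if ((0:ℤ), (0:ℕ)) = s then 1 else 0 := by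
      rw [L, Finsupp.single_apply]
    have hc : coef (s.1 - 0, s.2) (0, 0) = ((s.1 + (s.2:ℤ) : ℤ) : ℂ) := by
      simp only [coef]; push_cast; ring
    rw [hL, hc] at h
    by_cases h00 : ((0:ℤ), (0:ℕ)) = s
    · subst h00; simp at hs
    · rw [if_neg h00] at h
      simp only [mul_zero, add_zero, Finsupp.coe_zero, Pi.zero_apply] at h
      have : ((s.1 + (s.2:ℤ) : ℤ) : ℂ) ≠ 0 := Int.cast_ne_zero.mpr hs
      have := mul_eq_zero.mp h
      rcases this with h' | h'
      · simpa using h'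
      · exact absurd h' this
  -- constraints on b and mu
  have hBgen : ∀ r : ℤ × ℕ,
      b (r.1 - 1, r.2) * coef (r.1 - 1, r.2) (1, 0)
        + mu * ((r.1 : ℂ) * (if ((1:ℤ), (0:ℕ)) = r then 1 else 0)) = 0 := by
    intro r
    have h := DFunLike.congr_fun hD1 r
    rw [Finsupp.add_apply, Finsupp.smul_apply, br_apply_s15, dmap_apply, smul_eq_mul] at h
    have hL : (L 1 0) r = if ((1:ℤ), (0:ℕ)) = r then 1 else 0 := by
      rw [L, Finsupp.single_apply]
    rw [hL] at h
    simpa using h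
  have hmu : mu = b (0, 0) := by
    have h := hBgen (1, 0)
    norm_num [coef] at h
    linear_combination h
  have hB : ∀ s : ℤ × ℕ, s ≠ ((0:ℤ), (0:ℕ)) → s.1 ≠ 1 → b s = 0 := by
    intro s hs0 hs1
    have h := hBgen (s.1 + 1, s.2)
    have hne : ¬(((1:ℤ), (0:ℕ)) = (s.1 + 1, s.2)) := by
      simp only [Prod.mk.injEq, not_and]
      intro h1 h2
      exact hs0 (Prod.ext (by omega) (by omega))
    rw [if_neg hne] at h
    have hc : coef (s.1 + 1 - 1, s.2) (1, 0) = ((s.1 - 1 : ℤ) : ℂ) := by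
      simp only [coef]; push_cast; ring
    rw [hc] at h
    simp only [mul_zero, add_zero] at h
    have hsimp : (s.1 + 1 - 1, s.2) = s := by
      exact Prod.ext (by omega) rfl
    rw [hsimp] at h
    have hnz : ((s.1 - 1 : ℤ) : ℂ) ≠ 0 := Int.cast_ne_zero.mpr (by omega)
    rcases mul_eq_zero.mp h with h' | h'
    · exact h'
    · exact absurd h' hnz
  -- now compute Δ (L n 0)
  have hval1 : ∀ r : ℤ × ℕ, Δ (L n 0) r =
      a (r.1 - n, r.2) * coef (r.1 - n, r.2) (n, 0)
        + lam * ((r.1 : ℂ) * (if ((n:ℤ), (0:ℕ)) = r then 1 else 0)) := by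
    intro r
    rw [hxn, ha]
    rw [Finsupp.add_apply, Finsupp.smul_apply, br_apply_s15, dmap_apply, smul_eq_mul]
    rw [L, Finsupp.single_apply]
  have hval2 : ∀ r : ℤ × ℕ, Δ (L n 0) r =
      b (r.1 - n, r.2) * coef (r.1 - n, r.2) (n, 0)
        + mu * ((r.1 : ℂ) * (if ((n:ℤ), (0:ℕ)) = r then 1 else 0)) := by
    intro r
    rw [hyn, hb]
    rw [Finsupp.add_apply, Finsupp.smul_apply, br_apply_s15, dmap_apply, smul_eq_mul]
    rw [L, Finsupp.single_apply]
  refine Finsupp.ext fun r => ?_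
  simp only [Finsupp.coe_zero, Pi.zero_apply]
  by_cases hle : r.1 ≤ n
  · by_cases hr : ((n:ℤ), (0:ℕ)) = r
    · rw [hval2 r, if_pos hr, ← hr]
      have hc : coef ((n:ℤ) - n, (0:ℕ)) (n, 0) = ((-n : ℤ) : ℂ) := by
        simp only [coef]; push_cast; ring
      simp only [sub_self] at hc ⊢
      rw [hc, hmu]
      push_cast
      ring
    · rw [hval2 r, if_neg hr]
      have hb0 : b (r.1 - n, r.2) = 0 := by
        apply hB
        · simp only [Prod.mk.injEq, not_and, ne_eq]
          intro h1 h2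
          exact hr (Prod.ext (by omega) (by omega)).symm
        · show r.1 - n ≠ 1
          omega
      rw [hb0]
      ring
  · rw [hval1 r]
    have hr : ¬(((n:ℤ), (0:ℕ)) = r) := by
      intro h; rw [← h] at hle; exact hle le_rfl
    rw [if_neg hr]
    have ha0 : a (r.1 - n, r.2) = 0 := hA _ (show r.1 - n + (r.2:ℤ) ≠ 0 by omega)
    rw [ha0]
    ring

end
end
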